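/- Let k ∈ (−π, −π/2) with k ≠ −3π/4 and set ηⱼ = (2j−1)k. Then for all x ∈ ℝ and all t > 0, as L → ∞ over the positive integers: (1/L) Σ_{j=1}^{⌊Lt⌋} sin⁴(x − ηⱼ) → 3t/8, (1/L) Σ_{j=1}^{⌊Lt⌋} cos⁴(x − ηⱼ) → 3t/8, (1/L) Σ_{j=1}^{⌊Lt⌋} sin²(x − ηⱼ) cos²(x − ηⱼ) → t/8, and (1/L) Σ_{j=1}^{⌊Lt⌋} cos³(x − ηⱼ) sin(x − ηⱼ) → 0. -/

import Mathlib

open Filter Real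

lemma geom_bound (a : ℝ) (ha : Complex.exp (a * Complex.I) ≠ 1) :
    ∃ C : ℝ, 0 ≤ C ∧ ∀ N : ℕ,
      ‖∑ j ∈ Finset.Icc 1 N, Complex.exp ((a * j) * Complex.I)‖ ≤ C := by
  set z := Complex.exp (a * Complex.I) with hzdef
  have hzabs : ‖z‖ = 1 := Complex.norm_exp_ofReal_mul_I a
  refine ⟨2 / ‖z - 1‖, by positivity, fun N => ?_⟩
  have hsum : ∑ j ∈ Finset.Icc 1 N, Complex.exp ((a * j) * Complex.I)
      = z * ∑ j ∈ Finset.range N, z ^ j := by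
    rw [Finset.mul_sum, ← Finset.Ico_add_one_right_eq_Icc, Finset.sum_Ico_eq_sum_range]
    simp only [Nat.succ_sub_one, Nat.add_sub_cancel]
    refine Finset.sum_congr rfl fun i _ => ?_
    have h1 : ((a:ℂ) * ((1 + i : ℕ) : ℂ)) * Complex.I = ((1 + i : ℕ) : ℂ) * ((a:ℂ) * Complex.I) := by
      push_cast; ring
    rw [h1, Complex.exp_nat_mul, ← hzdef, pow_add, pow_one]
  rw [hsum, geom_sum_eq ha, norm_mul, hzabs, one_mul, norm_div]
  gcongr
  calc ‖z ^ N - 1‖ ≤ ‖z ^ N‖ + ‖(1:ℂ)‖ := norm_sub_le _ _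
    _ ≤ 2 := by rw [norm_pow, hzabs]; norm_num

lemma cos_bound (a c : ℝ) (ha : Complex.exp (a * Complex.I) ≠ 1) :
    ∃ C : ℝ, ∀ N : ℕ, |∑ j ∈ Finset.Icc 1 N, Real.cos (a * j + c)| ≤ C := by
  obtain ⟨C, hC0, hC⟩ := geom_bound a ha
  refine ⟨C, fun N => ?_⟩
  have key : ∑ j ∈ Finset.Icc 1 N, Real.cos (a * j + c)
      = (Complex.exp (c * Complex.I) * ∑ j ∈ Finset.Icc 1 N,
          Complex.exp ((a * j) * Complex.I)).re := by
    rw [Finset.mul_sum, Complex.re_sum]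
    refine Finset.sum_congr rfl fun j _ => ?_
    rw [← Complex.exp_add, show (c:ℂ) * Complex.I + (a * j) * Complex.I
        = ((a * j + c : ℝ) : ℂ) * Complex.I by push_cast; ring]
    exact (Complex.exp_ofReal_mul_I_re _).symm
  rw [key]
  calc |(Complex.exp (c * Complex.I) * ∑ j ∈ Finset.Icc 1 N,
          Complex.exp ((a * j) * Complex.I)).re|
      ≤ ‖Complex.exp (c * Complex.I) * ∑ j ∈ Finset.Icc 1 N,
          Complex.exp ((a * j) * Complex.I)‖ := Complex.abs_re_le_norm _
    _ ≤ C := by rw [norm_mul, Complex.norm_exp_ofReal_mul_I, one_mul]; exact hC N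

lemma sin_bound (a c : ℝ) (ha : Complex.exp (a * Complex.I) ≠ 1) :
    ∃ C : ℝ, ∀ N : ℕ, |∑ j ∈ Finset.Icc 1 N, Real.sin (a * j + c)| ≤ C := by
  obtain ⟨C, hC0, hC⟩ := geom_bound a ha
  refine ⟨C, fun N => ?_⟩
  have key : ∑ j ∈ Finset.Icc 1 N, Real.sin (a * j + c)
      = (Complex.exp (c * Complex.I) * ∑ j ∈ Finset.Icc 1 N,
          Complex.exp ((a * j) * Complex.I)).im := by
    rw [Finset.mul_sum, Complex.im_sum]
    refine Finset.sum_congr rfl fun j _ => ?_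
    rw [← Complex.exp_add, show (c:ℂ) * Complex.I + (a * j) * Complex.I
        = ((a * j + c : ℝ) : ℂ) * Complex.I by push_cast; ring]
    exact (Complex.exp_ofReal_mul_I_im _).symm
  rw [key]
  calc |(Complex.exp (c * Complex.I) * ∑ j ∈ Finset.Icc 1 N,
          Complex.exp ((a * j) * Complex.I)).im|
      ≤ ‖Complex.exp (c * Complex.I) * ∑ j ∈ Finset.Icc 1 N,
          Complex.exp ((a * j) * Complex.I)‖ := Complex.abs_im_le_norm _
    _ ≤ C := by rw [norm_mul, Complex.norm_exp_ofReal_mul_I, one_mul]; exact hC N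

lemma avg_tendsto_zero (t : ℝ) (f : ℕ → ℝ) (C : ℝ)
    (hC : ∀ N : ℕ, |∑ j ∈ Finset.Icc 1 N, f j| ≤ C) :
    Tendsto (fun L : ℕ => (1 / (L : ℝ)) * ∑ j ∈ Finset.Icc 1 ⌊(L : ℝ) * t⌋₊, f j)
      atTop (nhds 0) := by
  have hC0 : 0 ≤ C := le_trans (abs_nonneg _) (hC 0)
  refine squeeze_zero_norm (a := fun L : ℕ => C / (L:ℝ)) (fun L => ?_)
    (tendsto_const_div_atTop_nhds_zero_nat C)
  rw [Real.norm_eq_abs, abs_mul, abs_div, abs_one, Nat.abs_cast]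
  show _ ≤ C / (L:ℝ)
  rw [div_eq_mul_inv C, one_div, mul_comm C]
  gcongr
  exact hC _

lemma floor_avg (t : ℝ) (ht : 0 ≤ t) :
    Tendsto (fun L : ℕ => (⌊(L : ℝ) * t⌋₊ : ℝ) / L) atTop (nhds t) := by
  have := (tendsto_nat_floor_mul_div_atTop ht).comp (tendsto_natCast_atTop_atTop (R := ℝ))
  simpa [Function.comp_def, mul_comm] using this

lemma id_sin4 (θ : ℝ) : Real.sin θ ^ 4 = 3/8 - Real.cos (2*θ)/2 + Real.cos (4*θ)/8 := by
  have h4 : Real.cos (4*θ) = 2 * Real.cos (2*θ)^2 - 1 := by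
    rw [show (4:ℝ)*θ = 2*(2*θ) by ring]; exact Real.cos_two_mul _
  rw [h4, Real.cos_two_mul, show Real.sin θ^4 = (Real.sin θ^2)^2 by ring, Real.sin_sq]; ring

lemma id_cos4 (θ : ℝ) : Real.cos θ ^ 4 = 3/8 + Real.cos (2*θ)/2 + Real.cos (4*θ)/8 := by
  have h4 : Real.cos (4*θ) = 2 * Real.cos (2*θ)^2 - 1 := by
    rw [show (4:ℝ)*θ = 2*(2*θ) by ring]; exact Real.cos_two_mul _
  rw [h4, Real.cos_two_mul]; ring

lemma id_sc (θ : ℝ) : Real.sin θ ^ 2 * Real.cos θ ^ 2 = 1/8 - Real.cos (4*θ)/8 := by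
  have h4 : Real.cos (4*θ) = 2 * Real.cos (2*θ)^2 - 1 := by
    rw [show (4:ℝ)*θ = 2*(2*θ) by ring]; exact Real.cos_two_mul _
  rw [h4, Real.cos_two_mul, Real.sin_sq]; ring

lemma id_c3s (θ : ℝ) : Real.cos θ ^ 3 * Real.sin θ = Real.sin (2*θ)/4 + Real.sin (4*θ)/8 := by
  have h4 : Real.sin (4*θ) = 2 * Real.sin (2*θ) * Real.cos (2*θ) := by
    rw [show (4:ℝ)*θ = 2*(2*θ) by ring]; exact Real.sin_two_mul _
  rw [h4, Real.sin_two_mul, Real.cos_two_mul]; ring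

/-- for `k ∈ (−π, −π/2)`, `k ≠ −3π/4`, `ηⱼ = (2j−1)k`, all `x ∈ ℝ` and `t > 0`,
as `L → ∞`: `(1/L) Σ_{j=1}^{⌊Lt⌋} sin⁴(x − ηⱼ) → 3t/8`,
`(1/L) Σ_{j=1}^{⌊Lt⌋} cos⁴(x − ηⱼ) → 3t/8`,
`(1/L) Σ_{j=1}^{⌊Lt⌋} sin²(x − ηⱼ) cos²(x − ηⱼ) → t/8`, and
`(1/L) Σ_{j=1}^{⌊Lt⌋} cos³(x − ηⱼ) sin(x − ηⱼ) → 0`. -/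
theorem trig_sums_fourth_order (k : ℝ) (hk1 : -π < k) (hk2 : k < -(π / 2))
    (hk3 : k ≠ -(3 * π / 4)) (x t : ℝ) (ht : 0 < t) :
    Tendsto (fun L : ℕ => (1 / (L : ℝ)) *
        ∑ j ∈ Finset.Icc 1 ⌊(L : ℝ) * t⌋₊, Real.sin (x - (2 * (j : ℝ) - 1) * k) ^ 4)
      atTop (nhds (3 * t / 8)) ∧
    Tendsto (fun L : ℕ => (1 / (L : ℝ)) *
        ∑ j ∈ Finset.Icc 1 ⌊(L : ℝ) * t⌋₊, Real.cos (x - (2 * (j : ℝ) - 1) * k) ^ 4)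
      atTop (nhds (3 * t / 8)) ∧
    Tendsto (fun L : ℕ => (1 / (L : ℝ)) *
        ∑ j ∈ Finset.Icc 1 ⌊(L : ℝ) * t⌋₊,
          Real.sin (x - (2 * (j : ℝ) - 1) * k) ^ 2 *
            Real.cos (x - (2 * (j : ℝ) - 1) * k) ^ 2)
      atTop (nhds (t / 8)) ∧
    Tendsto (fun L : ℕ => (1 / (L : ℝ)) *
        ∑ j ∈ Finset.Icc 1 ⌊(L : ℝ) * t⌋₊,
          Real.cos (x - (2 * (j : ℝ) - 1) * k) ^ 3 *
            Real.sin (x - (2 * (j : ℝ) - 1) * k))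
      atTop (nhds 0) := by
  have hpi := Real.pi_pos
  -- non-degeneracy of the two frequencies
  have hne4 : Complex.exp (((-4*k : ℝ) : ℂ) * Complex.I) ≠ 1 := by
    intro h
    rw [Complex.exp_eq_one_iff] at h
    obtain ⟨n, hn⟩ := h
    rw [show (n : ℂ) * (2 * ↑π * Complex.I) = (((n : ℝ) * (2*π) : ℝ) : ℂ) * Complex.I by
      push_cast; ring] at hn
    have h2 : (-4*k : ℝ) = (n : ℝ) * (2*π) :=
      Complex.ofReal_inj.mp (mul_right_cancel₀ Complex.I_ne_zero hn)
    have hn1 : (1 : ℝ) < n := by nlinarith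
    have hn2 : (n : ℝ) < 2 := by nlinarith
    have : (1 : ℤ) < n := by exact_mod_cast hn1
    have : n < (2 : ℤ) := by exact_mod_cast hn2
    omega
  have hne8 : Complex.exp (((-8*k : ℝ) : ℂ) * Complex.I) ≠ 1 := by
    intro h
    rw [Complex.exp_eq_one_iff] at h
    obtain ⟨n, hn⟩ := h
    rw [show (n : ℂ) * (2 * ↑π * Complex.I) = (((n : ℝ) * (2*π) : ℝ) : ℂ) * Complex.I by
      push_cast; ring] at hn
    have h2 : (-8*k : ℝ) = (n : ℝ) * (2*π) :=
      Complex.ofReal_inj.mp (mul_right_cancel₀ Complex.I_ne_zero hn)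
    have hn1 : (2 : ℝ) < n := by nlinarith
    have hn2 : (n : ℝ) < 4 := by nlinarith
    have h3 : (2 : ℤ) < n := by exact_mod_cast hn1
    have h4 : n < (4 : ℤ) := by exact_mod_cast hn2
    have : n = 3 := by omega
    subst this
    apply hk3
    push_cast at h2
    linarith
  obtain ⟨C1, hC1⟩ := cos_bound (-4*k) (2*x+2*k) hne4
  obtain ⟨C2, hC2⟩ := cos_bound (-8*k) (4*x+4*k) hne8
  obtain ⟨C3, hC3⟩ := sin_bound (-4*k) (2*x+2*k) hne4
  obtain ⟨C4, hC4⟩ := sin_bound (-8*k) (4*x+4*k) hne8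
  have T1 := avg_tendsto_zero t _ C1 hC1
  have T2 := avg_tendsto_zero t _ C2 hC2
  have T3 := avg_tendsto_zero t _ C3 hC3
  have T4 := avg_tendsto_zero t _ C4 hC4
  have hF := floor_avg t ht.le
  have arg2 : ∀ j : ℕ, 2*(x - (2*(j:ℝ)-1)*k) = (-4*k)*(j:ℝ) + (2*x+2*k) := fun j => by ring
  have arg4 : ∀ j : ℕ, 4*(x - (2*(j:ℝ)-1)*k) = (-8*k)*(j:ℝ) + (4*x+4*k) := fun j => by ring
  refine ⟨?_, ?_, ?_, ?_⟩
  · have key : ∀ L : ℕ, (1 / (L : ℝ)) *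
        ∑ j ∈ Finset.Icc 1 ⌊(L : ℝ) * t⌋₊, Real.sin (x - (2 * (j : ℝ) - 1) * k) ^ 4
        = (3/8) * ((⌊(L:ℝ)*t⌋₊ : ℝ)/L)
          - (1/2) * ((1/(L:ℝ)) * ∑ j ∈ Finset.Icc 1 ⌊(L:ℝ)*t⌋₊, Real.cos ((-4*k)*j + (2*x+2*k)))
          + (1/8) * ((1/(L:ℝ)) * ∑ j ∈ Finset.Icc 1 ⌊(L:ℝ)*t⌋₊, Real.cos ((-8*k)*j + (4*x+4*k))) := by
      intro L
      rw [Finset.sum_congr rfl (fun j _ => by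
        rw [id_sin4 (x - (2*(j:ℝ)-1)*k), arg2 j, arg4 j])]
      rw [Finset.sum_add_distrib, Finset.sum_sub_distrib, Finset.sum_const,
        ← Finset.sum_div, ← Finset.sum_div, Nat.card_Icc, Nat.add_sub_cancel, nsmul_eq_mul]
      ring
    have h := ((hF.const_mul (3/8:ℝ)).sub (T1.const_mul (1/2:ℝ))).add (T2.const_mul (1/8:ℝ))
    rw [show (3/8:ℝ)*t - (1/2)*0 + (1/8)*0 = 3*t/8 by ring] at h
    exact h.congr fun L => (key L).symm
  · have key : ∀ L : ℕ, (1 / (L : ℝ)) *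
        ∑ j ∈ Finset.Icc 1 ⌊(L : ℝ) * t⌋₊, Real.cos (x - (2 * (j : ℝ) - 1) * k) ^ 4
        = (3/8) * ((⌊(L:ℝ)*t⌋₊ : ℝ)/L)
          + (1/2) * ((1/(L:ℝ)) * ∑ j ∈ Finset.Icc 1 ⌊(L:ℝ)*t⌋₊, Real.cos ((-4*k)*j + (2*x+2*k)))
          + (1/8) * ((1/(L:ℝ)) * ∑ j ∈ Finset.Icc 1 ⌊(L:ℝ)*t⌋₊, Real.cos ((-8*k)*j + (4*x+4*k))) := by
      intro L
      rw [Finset.sum_congr rfl (fun j _ => by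
        rw [id_cos4 (x - (2*(j:ℝ)-1)*k), arg2 j, arg4 j])]
      rw [Finset.sum_add_distrib, Finset.sum_add_distrib, Finset.sum_const,
        ← Finset.sum_div, ← Finset.sum_div, Nat.card_Icc, Nat.add_sub_cancel, nsmul_eq_mul]
      ring
    have h := ((hF.const_mul (3/8:ℝ)).add (T1.const_mul (1/2:ℝ))).add (T2.const_mul (1/8:ℝ))
    rw [show (3/8:ℝ)*t + (1/2)*0 + (1/8)*0 = 3*t/8 by ring] at h
    exact h.congr fun L => (key L).symm
  · have key : ∀ L : ℕ, (1 / (L : ℝ)) *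
        ∑ j ∈ Finset.Icc 1 ⌊(L : ℝ) * t⌋₊,
          Real.sin (x - (2 * (j : ℝ) - 1) * k) ^ 2 * Real.cos (x - (2 * (j : ℝ) - 1) * k) ^ 2
        = (1/8) * ((⌊(L:ℝ)*t⌋₊ : ℝ)/L)
          - (1/8) * ((1/(L:ℝ)) * ∑ j ∈ Finset.Icc 1 ⌊(L:ℝ)*t⌋₊, Real.cos ((-8*k)*j + (4*x+4*k))) := by
      intro L
      rw [Finset.sum_congr rfl (fun j _ => by
        rw [id_sc (x - (2*(j:ℝ)-1)*k), arg4 j])]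
      rw [Finset.sum_sub_distrib, Finset.sum_const,
        ← Finset.sum_div, Nat.card_Icc, Nat.add_sub_cancel, nsmul_eq_mul]
      ring
    have h := (hF.const_mul (1/8:ℝ)).sub (T2.const_mul (1/8:ℝ))
    rw [show (1/8:ℝ)*t - (1/8)*0 = t/8 by ring] at h
    exact h.congr fun L => (key L).symm
  · have key : ∀ L : ℕ, (1 / (L : ℝ)) *
        ∑ j ∈ Finset.Icc 1 ⌊(L : ℝ) * t⌋₊,
          Real.cos (x - (2 * (j : ℝ) - 1) * k) ^ 3 * Real.sin (x - (2 * (j : ℝ) - 1) * k)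
        = (1/4) * ((1/(L:ℝ)) * ∑ j ∈ Finset.Icc 1 ⌊(L:ℝ)*t⌋₊, Real.sin ((-4*k)*j + (2*x+2*k)))
          + (1/8) * ((1/(L:ℝ)) * ∑ j ∈ Finset.Icc 1 ⌊(L:ℝ)*t⌋₊, Real.sin ((-8*k)*j + (4*x+4*k))) := by
      intro L
      rw [Finset.sum_congr rfl (fun j _ => by
        rw [id_c3s (x - (2*(j:ℝ)-1)*k), arg2 j, arg4 j])]
      rw [Finset.sum_add_distrib, ← Finset.sum_div, ← Finset.sum_div]
      ring
    have h := (T3.const_mul (1/4:ℝ)).add (T4.const_mul (1/8:ℝ))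
    rw [show (1/4:ℝ)*0 + (1/8)*0 = 0 by ring] at h
    exact h.congr fun L => (key L).symm
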